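/- arXiv:1902.08175 — 2 statements merged into one kernel-verified Lean document; each statement's English description precedes it below -/
import Mathlib

section
/- Local monotonicity of the dynamic relay (Corollary, eq. (2.17)): Let ξ ∈ [−1,1] and u, v ∈ L²(0,T) be such that u(t) = v(t) for a.e. t ∈ [0,t₁] and u(t) ≥ v(t) for a.e. t ∈ [t₁,t₂], where 0 ≤ t₁ ≤ t₂ ≤ T. If y_u and y_v are the dynamic relay solutions for (u, ξ) and (v, ξ) respectively, then (y_u(t) − y_v(t))·(u(t) − v(t)) ≥ 0 for a.e. t ∈ [t₁,t₂]. -/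
open MeasureTheory Set

/-- The function `g(u) = k·(u − ρ₂)⁺ − k·(ρ₁ − u)⁺` driving the dynamic relay. -/
noncomputable def relayG (ρ₁ ρ₂ k u : ℝ) : ℝ :=
  k * max (u - ρ₂) 0 - k * max (ρ₁ - u) 0

/-- `y` (with a.e. derivative `y'`) is a dynamic relay solution on `[0,T]` for input `u`
and initial state `ξ`: `y ∈ H¹(0,T)` (encoded by `y' ∈ L²(0,T)` together with the
fundamental-theorem-of-calculus representation), `y(0) = ξ`, `|y| ≤ 1` on `[0,T]`, and
`q(t) := g(u(t)) − y'(t)` satisfies `q(t)(z − y(t)) ≤ 0` for all `z ∈ [−1,1]`, a.e. `t`. -/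
def IsDynRelay (T ρ₁ ρ₂ k : ℝ) (u : ℝ → ℝ) (ξ : ℝ) (y y' : ℝ → ℝ) : Prop :=
  MemLp y' 2 (volume.restrict (Ioc (0:ℝ) T)) ∧
  y 0 = ξ ∧
  (∀ t ∈ Icc (0:ℝ) T, y t = ξ + ∫ s in (0:ℝ)..t, y' s) ∧
  (∀ t ∈ Icc (0:ℝ) T, |y t| ≤ 1) ∧
  (∀ᵐ t ∂(volume.restrict (Ioo (0:ℝ) T)),
    ∀ z ∈ Icc (-1:ℝ) 1, (relayG ρ₁ ρ₂ k (u t) - y' t) * (z - y t) ≤ 0)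

/-- `relayG` is monotone nondecreasing in its argument when `k ≥ 0`. -/
lemma relayG_mono {ρ₁ ρ₂ k : ℝ} (hk : 0 ≤ k) {x y : ℝ} (h : x ≤ y) :
    relayG ρ₁ ρ₂ k x ≤ relayG ρ₁ ρ₂ k y := by
  unfold relayG
  have h1 : max (x - ρ₂) 0 ≤ max (y - ρ₂) 0 := max_le_max (by linarith) le_rfl
  have h2 : max (ρ₁ - y) 0 ≤ max (ρ₁ - x) 0 := max_le_max (by linarith) le_rfl
  have := mul_le_mul_of_nonneg_left h1 hk
  have := mul_le_mul_of_nonneg_left h2 hk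
  linarith

/-- Local monotonicity of the dynamic relay (Corollary, eq. (2.17)). -/
theorem dyn_relay_local_monotonicity (T ρ₁ ρ₂ k : ℝ)
    (hT : 0 < T) (hρ : ρ₁ < ρ₂) (hk : 0 < k)
    (t₁ t₂ : ℝ) (ht₁ : 0 ≤ t₁) (ht₁₂ : t₁ ≤ t₂) (ht₂ : t₂ ≤ T)
    (u v : ℝ → ℝ)
    (hu : MemLp u 2 (volume.restrict (Ioc (0:ℝ) T)))
    (hv : MemLp v 2 (volume.restrict (Ioc (0:ℝ) T)))
    (heq : ∀ᵐ t ∂(volume.restrict (Icc (0:ℝ) t₁)), u t = v t)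
    (hge : ∀ᵐ t ∂(volume.restrict (Icc t₁ t₂)), v t ≤ u t)
    (ξ : ℝ) (hξ : ξ ∈ Icc (-1:ℝ) 1)
    (yu yu' yv yv' : ℝ → ℝ)
    (hyu : IsDynRelay T ρ₁ ρ₂ k u ξ yu yu')
    (hyv : IsDynRelay T ρ₁ ρ₂ k v ξ yv yv') :
    ∀ᵐ t ∂(volume.restrict (Icc t₁ t₂)), 0 ≤ (yu t - yv t) * (u t - v t) := by
  obtain ⟨hu2, hu0, hurep, hub, huVI⟩ := hyu
  obtain ⟨hv2, hv0, hvrep, hvb, hvVI⟩ := hyv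
  haveI hfin : IsFiniteMeasure (volume.restrict (Ioc (0:ℝ) T)) :=
    ⟨by rw [Measure.restrict_apply_univ]; exact measure_Ioc_lt_top⟩
  have hIu : IntegrableOn yu' (Ioc (0:ℝ) T) := hu2.integrable one_le_two
  have hIv : IntegrableOn yv' (Ioc (0:ℝ) T) := hv2.integrable one_le_two
  set w' : ℝ → ℝ := fun t => yu' t - yv' t with hw'def
  have hIw : IntegrableOn w' (Icc (0:ℝ) T) := by
    rw [integrableOn_Icc_iff_integrableOn_Ioc]
    exact hIu.sub hIv
  -- interval integrability of the derivatives on subintervals of [0,T]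
  have hiv : ∀ a b : ℝ, a ∈ Icc (0:ℝ) T → b ∈ Icc (0:ℝ) T →
      IntervalIntegrable w' volume a b := by
    intro a b ha hb
    apply IntegrableOn.intervalIntegrable
    apply hIw.mono_set
    have : uIcc a b ⊆ uIcc (0:ℝ) T := by
      apply uIcc_subset_uIcc <;> rw [uIcc_of_le hT.le] <;> assumption
    rwa [uIcc_of_le hT.le] at this
  -- FTC representation of w = yu − yv
  have hwrep : ∀ t ∈ Icc (0:ℝ) T, yu t - yv t = ∫ s in (0:ℝ)..t, w' s := by
    intro t ht
    have h1 : IntervalIntegrable yu' volume 0 t := by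
      rw [intervalIntegrable_iff_integrableOn_Ioc_of_le ht.1]
      exact hIu.mono_set (Ioc_subset_Ioc le_rfl ht.2)
    have h2 : IntervalIntegrable yv' volume 0 t := by
      rw [intervalIntegrable_iff_integrableOn_Ioc_of_le ht.1]
      exact hIv.mono_set (Ioc_subset_Ioc le_rfl ht.2)
    rw [hurep t ht, hvrep t ht]
    simp only [hw'def]
    rw [intervalIntegral.integral_sub h1 h2]
    ring
  -- continuity of w on [0,T]
  have hwc : ContinuousOn (fun t => yu t - yv t) (Icc (0:ℝ) T) := by
    have h1 : ContinuousOn (fun t => ∫ s in (0:ℝ)..t, w' s) (Icc (0:ℝ) T) := by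
      have := intervalIntegral.continuousOn_primitive_interval
        (a := (0:ℝ)) (b := T) (μ := volume) (f := w')
        (by rwa [uIcc_of_le hT.le])
      rwa [uIcc_of_le hT.le] at this
    exact h1.congr hwrep
  -- a.e. t avoids any fixed point
  have hne : ∀ c : ℝ, ∀ᵐ t : ℝ ∂volume, t ≠ c := by
    intro c
    have hs : {t : ℝ | ¬ t ≠ c} = {c} := by ext t; simp
    rw [ae_iff, hs]
    exact measure_singleton c
  -- key differential inequality: where w < 0 on (0,t₂), w' ≥ 0
  have huVI' := (ae_restrict_iff' measurableSet_Ioo).mp huVI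
  have hvVI' := (ae_restrict_iff' measurableSet_Ioo).mp hvVI
  have heq' := (ae_restrict_iff' measurableSet_Icc).mp heq
  have hge' := (ae_restrict_iff' measurableSet_Icc).mp hge
  have key : ∀ᵐ t : ℝ ∂volume,
      t ∈ Ioo (0:ℝ) t₂ → yu t - yv t < 0 → 0 ≤ w' t := by
    filter_upwards [huVI', hvVI', heq', hge'] with t hVu hVv he hg ht hneg
    have htT : t ∈ Ioo (0:ℝ) T := ⟨ht.1, lt_of_lt_of_le ht.2 ht₂⟩
    have htI : t ∈ Icc (0:ℝ) T := ⟨htT.1.le, htT.2.le⟩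
    have h1 := hVu htT (yv t) (mem_Icc.mpr (abs_le.mp (hvb t htI)))
    have h2 := hVv htT (yu t) (mem_Icc.mpr (abs_le.mp (hub t htI)))
    have hab : relayG ρ₁ ρ₂ k (v t) ≤ relayG ρ₁ ρ₂ k (u t) := by
      rcases le_total t t₁ with h | h
      · rw [he ⟨ht.1.le, h⟩]
      · exact relayG_mono hk.le (hg ⟨h, ht.2.le⟩)
    have hprod : 0 ≤ (relayG ρ₁ ρ₂ k (u t) - relayG ρ₁ ρ₂ k (v t)) * (yv t - yu t) :=
      mul_nonneg (by linarith) (by linarith)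
    show (0:ℝ) ≤ yu' t - yv' t
    nlinarith [h1, h2, hprod, hneg]
  -- w ≥ 0 on [0, t₂]
  have hpos : ∀ t ∈ Icc (0:ℝ) t₂, 0 ≤ yu t - yv t := by
    by_contra hcon
    push_neg at hcon
    obtain ⟨ts, hts, hneg⟩ := hcon
    have htsT : ts ∈ Icc (0:ℝ) T := ⟨hts.1, hts.2.trans ht₂⟩
    set S := {s ∈ Icc (0:ℝ) ts | 0 ≤ yu s - yv s} with hSdef
    have h0S : (0:ℝ) ∈ S := ⟨⟨le_refl 0, hts.1⟩, by rw [hu0, hv0]; simp⟩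
    have hbdd : BddAbove S := ⟨ts, fun s hs => hs.1.2⟩
    have hsub : Icc (0:ℝ) ts ⊆ Icc 0 T := Icc_subset_Icc le_rfl htsT.2
    have hScl : IsClosed S := by
      have hS : S = Icc (0:ℝ) ts ∩ (fun s => yu s - yv s) ⁻¹' (Ici 0) := by
        ext s; simp only [hSdef, mem_sep_iff, mem_inter_iff, mem_preimage, mem_Ici]
      rw [hS]
      exact (hwc.mono hsub).preimage_isClosed_of_isClosed isClosed_Icc isClosed_Ici
    set ss := sSup S with hssdef
    have hsS : ss ∈ S := hScl.csSup_mem ⟨0, h0S⟩ hbdd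
    have hssT : ss ∈ Icc (0:ℝ) T := hsub hsS.1
    have hlt : ss < ts := by
      rcases lt_or_eq_of_le hsS.1.2 with h | h
      · exact h
      · exfalso; rw [h] at hsS; linarith [hsS.2]
    have hmid : ∀ s ∈ Ioc ss ts, yu s - yv s < 0 := by
      intro s hs
      by_contra hns
      push_neg at hns
      have hsmem : s ∈ S := ⟨⟨hsS.1.1.trans hs.1.le, hs.2⟩, hns⟩
      exact absurd (le_csSup hbdd hsmem) (not_le.mpr hs.1)
    have hii1 : IntervalIntegrable w' volume 0 ss := hiv 0 ss ⟨le_rfl, hT.le⟩ hssT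
    have hii2 : IntervalIntegrable w' volume ss ts := hiv ss ts hssT htsT
    have hInn : 0 ≤ ∫ s in ss..ts, w' s := by
      apply intervalIntegral.integral_nonneg_of_ae_restrict hlt.le
      filter_upwards [ae_restrict_mem measurableSet_Icc, ae_restrict_of_ae key,
        ae_restrict_of_ae (hne ss), ae_restrict_of_ae (hne t₂)] with s hsmem hkey hnss hnt₂
      have hs1 : ss < s := lt_of_le_of_ne hsmem.1 (Ne.symm hnss)
      have hs2 : s < t₂ := lt_of_le_of_ne (hsmem.2.trans hts.2) hnt₂
      have hsIoo : s ∈ Ioo (0:ℝ) t₂ := ⟨lt_of_le_of_lt hsS.1.1 hs1, hs2⟩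
      exact hkey hsIoo (hmid s ⟨hs1, hsmem.2⟩)
    have hsum : yu ts - yv ts = (yu ss - yv ss) + ∫ s in ss..ts, w' s := by
      rw [hwrep ts htsT, hwrep ss hssT,
        ← intervalIntegral.integral_add_adjacent_intervals hii1 hii2]
    have := hsS.2
    linarith
  filter_upwards [ae_restrict_mem measurableSet_Icc, hge] with t ht hvu
  exact mul_nonneg (hpos t ⟨ht₁.trans ht.1, ht.2⟩) (sub_nonneg.mpr hvu)
end

section
/- Pointwise Gronwall estimate for the difference of two dynamic relays (intermediate estimate in the proof of Lemma 2.3): Let k > 0, u₁, u₂ ∈ L²(0,T), ξ₁, ξ₂ ∈ [−1,1], and let y₁, y₂ be the dynamic relay solutions for (u₁, ξ₁) and (u₂, ξ₂) respectively. Then for every t ∈ [0,T], |y₁(t) − y₂(t)|² ≤ e^{t}·( |ξ₁ − ξ₂|² + k²·∫₀^t |u₁(s) − u₂(s)|² ds ). -/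
open MeasureTheory Set

lemma relayG_lipschitz {ρ₁ ρ₂ k : ℝ} (hρ : ρ₁ < ρ₂) (hk : 0 < k) (a b : ℝ) :
    |relayG ρ₁ ρ₂ k a - relayG ρ₁ ρ₂ k b| ≤ k * |a - b| := by
  unfold relayG
  rcases le_total (a - ρ₂) 0 with h1 | h1 <;> rcases le_total (b - ρ₂) 0 with h2 | h2 <;>
    rcases le_total (ρ₁ - a) 0 with h3 | h3 <;> rcases le_total (ρ₁ - b) 0 with h4 | h4 <;>
    rcases abs_cases (a - b) with ⟨hab, _⟩ | ⟨hab, _⟩ <;>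
    simp only [max_eq_left, max_eq_right, h1, h2, h3, h4] <;>
    rw [abs_le] <;> constructor <;> nlinarith


lemma sq_integral_aux {t : ℝ} {g : ℝ → ℝ} (hgm : StronglyMeasurable g)
    (hg : IntegrableOn g (Ioc 0 t)) :
    ∫ s in Ioc (0:ℝ) t, g s * ∫ r in Ioc (0:ℝ) s, g r
      = (∫ s in Ioc (0:ℝ) t, g s) ^ 2 / 2 := by
  set μ := volume.restrict (Ioc (0:ℝ) t) with hμ
  have hP : Integrable (fun p : ℝ × ℝ => g p.1 * g p.2) (μ.prod μ) := hg.mul_prod hg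
  have hPm : StronglyMeasurable (fun p : ℝ × ℝ => g p.1 * g p.2) :=
    (hgm.comp_measurable measurable_fst).mul (hgm.comp_measurable measurable_snd)
  set P : ℝ × ℝ → ℝ := fun p => g p.1 * g p.2 with hPdef
  set A : Set (ℝ × ℝ) := {p | p.2 ≤ p.1} with hA
  have hAm : MeasurableSet A := measurableSet_le measurable_snd measurable_fst
  set B : Set (ℝ × ℝ) := {p | p.1 ≤ p.2} with hB
  have hBm : MeasurableSet B := measurableSet_le measurable_fst measurable_snd
  have hH : Integrable (A.indicator P) (μ.prod μ) := hP.indicator hAm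
  have hG : Integrable (B.indicator P) (μ.prod μ) := hP.indicator hBm
  -- I1 computation
  have hI1 : ∫ p, A.indicator P p ∂(μ.prod μ)
      = ∫ s in Ioc (0:ℝ) t, g s * ∫ r in Ioc (0:ℝ) s, g r := by
    rw [integral_prod _ hH]
    rw [hμ]
    refine setIntegral_congr_fun measurableSet_Ioc (fun s hs => ?_)
    have : (fun r => A.indicator P (s, r)) = (Iic s).indicator (fun r => g s * g r) := by
      funext r
      simp only [Set.indicator_apply, hA, mem_setOf_eq, mem_Iic, hPdef]
    rw [this, integral_indicator measurableSet_Iic, Measure.restrict_restrict measurableSet_Iic]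
    have hset : Iic s ∩ Ioc (0:ℝ) t = Ioc 0 s := by
      rw [inter_comm, Ioc_inter_Iic, min_eq_right hs.2]
    rw [hset, MeasureTheory.integral_const_mul]
  -- symmetry
  have hswap : ∫ p, B.indicator P p ∂(μ.prod μ) = ∫ p, A.indicator P p ∂(μ.prod μ) := by
    have : (fun p : ℝ × ℝ => B.indicator P p.swap) = A.indicator P := by
      funext p
      simp only [Set.indicator_apply, hA, hB, Prod.swap, mem_setOf_eq]
      by_cases h : p.2 ≤ p.1 <;> simp [h, hPdef, mul_comm]
    rw [← integral_prod_swap (B.indicator P), this]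
  -- diagonal is null
  have hdiag : (μ.prod μ) {p : ℝ × ℝ | p.1 = p.2} = 0 := by
    have hDm : MeasurableSet {p : ℝ × ℝ | p.1 = p.2} :=
      measurableSet_eq_fun measurable_fst measurable_snd
    rw [Measure.prod_apply hDm]
    have : ∀ x : ℝ, μ (Prod.mk x ⁻¹' {p : ℝ × ℝ | p.1 = p.2}) = 0 := by
      intro x
      have : Prod.mk x ⁻¹' {p : ℝ × ℝ | p.1 = p.2} = {x} := by
        ext r; simp [eq_comm]
      rw [this, hμ]
      exact le_antisymm ((Measure.restrict_apply_le _ _).trans_eq (Real.volume_singleton)) bot_le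
    simp [this]
  -- sum identity
  have hsum : ∀ p : ℝ × ℝ, A.indicator P p + B.indicator P p
      = P p + ({p : ℝ × ℝ | p.1 = p.2} : Set (ℝ × ℝ)).indicator P p := by
    intro p
    simp only [Set.indicator_apply, hA, hB, mem_setOf_eq]
    rcases lt_trichotomy p.1 p.2 with h | h | h
    · simp [h.le, not_le.2 h, h.ne]
    · simp [h.le, h.ge, h]
    · simp [h.le, not_le.2 h, h.ne']
  have hDzero : ∫ p, ({p : ℝ × ℝ | p.1 = p.2} : Set (ℝ × ℝ)).indicator P p ∂(μ.prod μ) = 0 := by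
    have : ({p : ℝ × ℝ | p.1 = p.2} : Set (ℝ × ℝ)).indicator P =ᵐ[μ.prod μ] 0 := by
      filter_upwards [measure_eq_zero_iff_ae_notMem.mp hdiag] with p hp
      simp [Set.indicator_apply, hp]
    calc ∫ p, ({p : ℝ × ℝ | p.1 = p.2} : Set (ℝ × ℝ)).indicator P p ∂(μ.prod μ)
        = ∫ p, (0 : ℝ × ℝ → ℝ) p ∂(μ.prod μ) := integral_congr_ae this
      _ = 0 := by simp
  have hPint : ∫ p, P p ∂(μ.prod μ) = (∫ s in Ioc (0:ℝ) t, g s) ^ 2 := by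
    rw [hPdef]
    rw [integral_prod_mul]
    ring
  have key : (∫ p, A.indicator P p ∂(μ.prod μ)) + (∫ p, B.indicator P p ∂(μ.prod μ))
      = (∫ s in Ioc (0:ℝ) t, g s) ^ 2 := by
    rw [← integral_add hH hG]
    have : (fun p => A.indicator P p + B.indicator P p)
        = fun p => P p + ({p : ℝ × ℝ | p.1 = p.2} : Set (ℝ × ℝ)).indicator P p := by
      funext p; exact hsum p
    rw [this, integral_add hP (hP.indicator (measurableSet_eq_fun measurable_fst measurable_snd)),
      hDzero, hPint, add_zero]
  rw [hswap, hI1] at key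
  linarith [key]

lemma sq_integral_key {t : ℝ} {f : ℝ → ℝ} (hf : IntegrableOn f (Ioc 0 t)) :
    ∫ s in Ioc (0:ℝ) t, f s * ∫ r in Ioc (0:ℝ) s, f r
      = (∫ s in Ioc (0:ℝ) t, f s) ^ 2 / 2 := by
  set g := hf.1.mk f with hgdef
  have hgm : StronglyMeasurable g := hf.1.stronglyMeasurable_mk
  have heq : f =ᵐ[volume.restrict (Ioc (0:ℝ) t)] g := hf.1.ae_eq_mk
  have hg : IntegrableOn g (Ioc 0 t) := hf.congr heq
  have houter : ∫ s in Ioc (0:ℝ) t, f s = ∫ s in Ioc (0:ℝ) t, g s := integral_congr_ae heq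
  have hinner : ∀ s ∈ Ioc (0:ℝ) t, ∫ r in Ioc (0:ℝ) s, f r = ∫ r in Ioc (0:ℝ) s, g r := by
    intro s hs
    exact integral_congr_ae (ae_restrict_of_ae_restrict_of_subset (Ioc_subset_Ioc_right hs.2) heq)
  have hmain : ∫ s in Ioc (0:ℝ) t, f s * ∫ r in Ioc (0:ℝ) s, f r
      = ∫ s in Ioc (0:ℝ) t, g s * ∫ r in Ioc (0:ℝ) s, g r := by
    apply integral_congr_ae
    filter_upwards [heq, ae_restrict_mem measurableSet_Ioc] with s hfs hs
    rw [hfs, hinner s hs]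
  rw [hmain, houter, sq_integral_aux hgm hg]

lemma gronwall_aux {T : ℝ} (hT : 0 < T) {w a : ℝ → ℝ}
    (hw : ContinuousOn w (Icc 0 T)) (ha : ContinuousOn a (Icc 0 T))
    (hmono : MonotoneOn a (Icc 0 T))
    (hineq : ∀ t ∈ Icc (0:ℝ) T, w t ≤ a t + ∫ s in Ioc (0:ℝ) t, w s) :
    ∀ t ∈ Icc (0:ℝ) T, w t ≤ Real.exp t * a t := by
  have hwInt : IntegrableOn w (Icc 0 T) := hw.integrableOn_Icc
  set B : ℝ → ℝ := fun t => ∫ s in Ioc (0:ℝ) t, w s with hBdef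
  have hBcont : ContinuousOn B (Icc 0 T) := intervalIntegral.continuousOn_primitive hwInt
  -- derivative of B at interior points
  have hBderiv : ∀ x ∈ Ioo (0:ℝ) T, HasDerivAt B (w x) x := by
    intro x hx
    have hiv : IntervalIntegrable w volume 0 x := by
      rw [intervalIntegrable_iff_integrableOn_Ioc_of_le hx.1.le]
      exact hwInt.mono_set (Ioc_subset_Icc_self.trans (Icc_subset_Icc le_rfl hx.2.le))
    have hmeas : StronglyMeasurableAtFilter w (nhds x) :=
      (hw.mono Ioo_subset_Icc_self).stronglyMeasurableAtFilter isOpen_Ioo x hx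
    have hcontAt : ContinuousAt w x := hw.continuousAt (Icc_mem_nhds hx.1 hx.2)
    have h1 : HasDerivAt (fun u => ∫ s in (0:ℝ)..u, w s) (w x) x :=
      intervalIntegral.integral_hasDerivAt_right hiv hmeas hcontAt
    apply h1.congr_of_eventuallyEq
    filter_upwards [isOpen_Ioi.mem_nhds (show x ∈ Ioi (0:ℝ) from hx.1)] with u hu
    rw [hBdef]
    simp only
    rw [intervalIntegral.integral_of_le (le_of_lt hu)]
  -- D
  set D : ℝ → ℝ := fun t => ∫ s in Ioc (0:ℝ) t, Real.exp (-s) * a s with hDdef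
  have haInt : IntegrableOn (fun s => Real.exp (-s) * a s) (Icc 0 T) :=
    (((Real.continuous_exp.comp continuous_neg).continuousOn).mul ha).integrableOn_Icc
  have hDcont : ContinuousOn D (Icc 0 T) := intervalIntegral.continuousOn_primitive haInt
  have hDderiv : ∀ x ∈ Ioo (0:ℝ) T, HasDerivAt D (Real.exp (-x) * a x) x := by
    intro x hx
    have hiv : IntervalIntegrable (fun s => Real.exp (-s) * a s) volume 0 x := by
      rw [intervalIntegrable_iff_integrableOn_Ioc_of_le hx.1.le]
      exact haInt.mono_set (Ioc_subset_Icc_self.trans (Icc_subset_Icc le_rfl hx.2.le))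
    have hmeas : StronglyMeasurableAtFilter (fun s => Real.exp (-s) * a s) (nhds x) :=
      (((Real.continuous_exp.comp continuous_neg).continuousOn).mul
        (ha.mono Ioo_subset_Icc_self)).stronglyMeasurableAtFilter isOpen_Ioo x hx
    have hcontAt : ContinuousAt (fun s => Real.exp (-s) * a s) x :=
      ((Real.continuous_exp.comp continuous_neg).continuousAt).mul
        (ha.continuousAt (Icc_mem_nhds hx.1 hx.2))
    have h1 := intervalIntegral.integral_hasDerivAt_right hiv hmeas hcontAt
    apply h1.congr_of_eventuallyEq
    filter_upwards [isOpen_Ioi.mem_nhds (show x ∈ Ioi (0:ℝ) from hx.1)] with u hu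
    rw [hDdef]
    simp only
    rw [intervalIntegral.integral_of_le (le_of_lt hu)]
  -- φ
  set φ : ℝ → ℝ := fun t => Real.exp (-t) * B t - D t with hφdef
  have hφderiv : ∀ x ∈ Ioo (0:ℝ) T, HasDerivAt φ
      (Real.exp (-x) * w x + (-Real.exp (-x)) * B x - Real.exp (-x) * a x) x := by
    intro x hx
    have hexp : HasDerivAt (fun s => Real.exp (-s)) (-Real.exp (-x)) x := by
      simpa [Function.comp_def] using ((Real.hasDerivAt_exp (-x)).comp x (hasDerivAt_neg x))
    have := (hexp.mul (hBderiv x hx)).sub (hDderiv x hx)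
    exact this.congr_deriv (by ring)
  have hφcont : ContinuousOn φ (Icc 0 T) :=
    (((Real.continuous_exp.comp continuous_neg).continuousOn).mul hBcont).sub hDcont
  have hφanti : AntitoneOn φ (Icc 0 T) := by
    apply antitoneOn_of_deriv_nonpos (convex_Icc 0 T) hφcont
    · intro x hx
      rw [interior_Icc] at hx
      exact ((hφderiv x hx).differentiableAt).differentiableWithinAt
    · intro x hx
      rw [interior_Icc] at hx
      rw [(hφderiv x hx).deriv]
      have h1 := hineq x (Ioo_subset_Icc_self hx)
      have h2 : (0:ℝ) < Real.exp (-x) := Real.exp_pos _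
      nlinarith [h1, h2]
  intro t ht
  have hφ0 : φ 0 = 0 := by
    simp [hφdef, hBdef, hDdef]
  have hφt : φ t ≤ 0 := by
    rw [← hφ0]
    exact hφanti (left_mem_Icc.2 hT.le) ht ht.1
  -- D t ≤ a t * (1 - exp (-t))
  have hexp_int : ∫ s in Ioc (0:ℝ) t, Real.exp (-s) = 1 - Real.exp (-t) := by
    rw [← intervalIntegral.integral_of_le ht.1]
    have hderiv : ∀ s ∈ uIcc (0:ℝ) t, HasDerivAt (fun s => -Real.exp (-s)) (Real.exp (-s)) s := by
      intro s _
      simpa [Function.comp_def, Pi.neg_def] using ((Real.hasDerivAt_exp (-s)).comp s (hasDerivAt_neg s)).neg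
    rw [intervalIntegral.integral_eq_sub_of_hasDerivAt hderiv
      ((Real.continuous_exp.comp continuous_neg).intervalIntegrable 0 t)]
    simp
    ring
  have hDle : D t ≤ a t * (1 - Real.exp (-t)) := by
    have h1 : D t ≤ ∫ s in Ioc (0:ℝ) t, Real.exp (-s) * a t := by
      apply setIntegral_mono_on
      · exact haInt.mono_set (Ioc_subset_Icc_self.trans (Icc_subset_Icc le_rfl ht.2))
      · exact (((Real.continuous_exp.comp continuous_neg).mul
          continuous_const).integrableOn_Ioc)
      · exact measurableSet_Ioc
      · intro s hs
        have hsT : s ∈ Icc (0:ℝ) T := ⟨hs.1.le, hs.2.trans ht.2⟩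
        exact mul_le_mul_of_nonneg_left (hmono hsT ht hs.2) (Real.exp_pos _).le
    have h2 : ∫ s in Ioc (0:ℝ) t, Real.exp (-s) * a t = a t * (1 - Real.exp (-t)) := by
      rw [integral_mul_const, hexp_int]
      ring
    linarith [h1.trans h2.le]
  have hBle : B t ≤ a t * (Real.exp t - 1) := by
    have h1 : Real.exp (-t) * B t ≤ D t := by
      have := hφt
      rw [hφdef] at this
      simp only at this
      linarith
    have h2 : Real.exp (-t) * B t ≤ a t * (1 - Real.exp (-t)) := h1.trans hDle
    have h3 : (0:ℝ) < Real.exp t := Real.exp_pos t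
    have h4 : Real.exp t * Real.exp (-t) = 1 := by
      rw [← Real.exp_add]; simp
    have h6 := mul_le_mul_of_nonneg_left h2 h3.le
    have h7 : Real.exp t * (Real.exp (-t) * B t) = B t := by rw [← mul_assoc, h4, one_mul]
    have h8 : Real.exp t * (a t * (1 - Real.exp (-t))) = a t * (Real.exp t - 1) := by
      linear_combination (-(a t)) * h4
    linarith [h6.trans_eq h8, h7.symm.le]
  have hwa := hineq t ht
  have h9 : a t * (Real.exp t - 1) = Real.exp t * a t - a t := by ring
  rw [h9] at hBle
  linarith [hwa, hBle]


set_option maxHeartbeats 1600000 in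
/-- Pointwise Gronwall estimate for the difference of two dynamic relays
(intermediate estimate in the proof of Lemma 2.3). -/
theorem dyn_relay_gronwall_estimate (T ρ₁ ρ₂ k : ℝ)
    (hT : 0 < T) (hρ : ρ₁ < ρ₂) (hk : 0 < k)
    (u₁ u₂ : ℝ → ℝ)
    (hu₁ : MemLp u₁ 2 (volume.restrict (Ioc (0:ℝ) T)))
    (hu₂ : MemLp u₂ 2 (volume.restrict (Ioc (0:ℝ) T)))
    (ξ₁ ξ₂ : ℝ) (hξ₁ : ξ₁ ∈ Icc (-1:ℝ) 1) (hξ₂ : ξ₂ ∈ Icc (-1:ℝ) 1)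
    (y₁ y₁' y₂ y₂' : ℝ → ℝ)
    (h₁ : IsDynRelay T ρ₁ ρ₂ k u₁ ξ₁ y₁ y₁')
    (h₂ : IsDynRelay T ρ₁ ρ₂ k u₂ ξ₂ y₂ y₂') :
    ∀ t ∈ Icc (0:ℝ) T,
      (y₁ t - y₂ t) ^ 2 ≤ Real.exp t *
        ((ξ₁ - ξ₂) ^ 2 + k ^ 2 * ∫ s in (0:ℝ)..t, (u₁ s - u₂ s) ^ 2) := by
  haveI : IsFiniteMeasure (volume.restrict (Ioc (0:ℝ) T)) :=
    ⟨by rw [Measure.restrict_apply_univ]; exact measure_Ioc_lt_top⟩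
  obtain ⟨hL₁, hy₁0, hFTC₁, hbd₁, hVI₁⟩ := h₁
  obtain ⟨hL₂, hy₂0, hFTC₂, hbd₂, hVI₂⟩ := h₂
  set c : ℝ := ξ₁ - ξ₂ with hc
  set f : ℝ → ℝ := fun s => y₁' s - y₂' s with hfdef
  have hy1Int : IntegrableOn y₁' (Ioc 0 T) := hL₁.integrable one_le_two
  have hy2Int : IntegrableOn y₂' (Ioc 0 T) := hL₂.integrable one_le_two
  have hfInt : IntegrableOn f (Ioc 0 T) := hy1Int.sub hy2Int
  have hfIntIcc : IntegrableOn f (Icc 0 T) := by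
    rw [integrableOn_Icc_iff_integrableOn_Ioc]; exact hfInt
  set F : ℝ → ℝ := fun s => ∫ r in Ioc (0:ℝ) s, f r with hFdef
  set v : ℝ → ℝ := fun s => c + F s with hvdef
  have hFcont : ContinuousOn F (Icc 0 T) := intervalIntegral.continuousOn_primitive hfIntIcc
  have hvcont : ContinuousOn v (Icc 0 T) := continuousOn_const.add hFcont
  -- v agrees with y₁ - y₂ on [0,T]
  have hveq : ∀ s ∈ Icc (0:ℝ) T, v s = y₁ s - y₂ s := by
    intro s hs
    have h1 : IntervalIntegrable y₁' volume 0 s := by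
      rw [intervalIntegrable_iff_integrableOn_Ioc_of_le hs.1]
      exact hy1Int.mono_set (Ioc_subset_Ioc_right hs.2)
    have h2 : IntervalIntegrable y₂' volume 0 s := by
      rw [intervalIntegrable_iff_integrableOn_Ioc_of_le hs.1]
      exact hy2Int.mono_set (Ioc_subset_Ioc_right hs.2)
    have hFs : F s = (∫ r in (0:ℝ)..s, y₁' r) - ∫ r in (0:ℝ)..s, y₂' r := by
      rw [hFdef]
      simp only
      rw [← intervalIntegral.integral_of_le hs.1, intervalIntegral.integral_sub h1 h2]
    rw [hvdef]
    simp only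
    rw [hFs, hFTC₁ s hs, hFTC₂ s hs, hc]
    ring
  set w : ℝ → ℝ := fun s => (v s) ^ 2 with hwdef
  have hwcont : ContinuousOn w (Icc 0 T) := hvcont.pow 2
  set a : ℝ → ℝ := fun s => (ξ₁ - ξ₂) ^ 2 + k ^ 2 * ∫ r in Ioc (0:ℝ) s, (u₁ r - u₂ r) ^ 2
    with hadef
  have hΔu2 : IntegrableOn (fun s => (u₁ s - u₂ s) ^ 2) (Ioc 0 T) := (hu₁.sub hu₂).integrable_sq
  have hΔu2Icc : IntegrableOn (fun s => (u₁ s - u₂ s) ^ 2) (Icc 0 T) := by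
    rw [integrableOn_Icc_iff_integrableOn_Ioc]; exact hΔu2
  have hacont : ContinuousOn a (Icc 0 T) :=
    continuousOn_const.add (continuousOn_const.mul
      (intervalIntegral.continuousOn_primitive hΔu2Icc))
  have hamono : MonotoneOn a (Icc 0 T) := by
    intro s hs t ht hst
    rw [hadef]
    simp only
    have : (∫ r in Ioc (0:ℝ) s, (u₁ r - u₂ r) ^ 2) ≤ ∫ r in Ioc (0:ℝ) t, (u₁ r - u₂ r) ^ 2 := by
      apply setIntegral_mono_set (hΔu2.mono_set (Ioc_subset_Ioc_right ht.2))
      · exact Filter.Eventually.of_forall (fun r => sq_nonneg _)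
      · exact HasSubset.Subset.eventuallyLE (Ioc_subset_Ioc_right hst)
    nlinarith [sq_nonneg k]
  -- bound on v
  obtain ⟨M, hM⟩ := isCompact_Icc.exists_bound_of_continuousOn hvcont
  -- The key integral inequality
  have hkey : ∀ t ∈ Icc (0:ℝ) T, w t ≤ a t + ∫ s in Ioc (0:ℝ) t, w s := by
    intro t ht
    have hsub : Ioc (0:ℝ) t ⊆ Ioc 0 T := Ioc_subset_Ioc_right ht.2
    have hsubIcc : Ioc (0:ℝ) t ⊆ Icc 0 T := hsub.trans Ioc_subset_Icc_self
    have hfInt_t : IntegrableOn f (Ioc 0 t) := hfInt.mono_set hsub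
    -- integrability of f * v on Ioc 0 t
    have hvmeas : AEStronglyMeasurable v (volume.restrict (Ioc (0:ℝ) t)) :=
      (hvcont.mono hsubIcc).aestronglyMeasurable measurableSet_Ioc
    have hfvInt : IntegrableOn (fun s => f s * v s) (Ioc 0 t) := by
      apply Integrable.mono' (hfInt_t.norm.const_mul M) (hfInt_t.1.mul hvmeas)
      filter_upwards [ae_restrict_mem measurableSet_Ioc] with s hs
      have h2 : ‖v s‖ ≤ M := hM s (hsubIcc hs)
      simp only [Pi.mul_apply, norm_mul]
      calc ‖f s‖ * ‖v s‖ ≤ ‖f s‖ * M := mul_le_mul_of_nonneg_left h2 (norm_nonneg _)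
        _ = M * ‖f s‖ := mul_comm _ _
    have hfFInt : IntegrableOn (fun s => f s * F s) (Ioc 0 t) := by
      have heqfun : (fun s => f s * F s) = fun s => f s * v s - c * f s := by
        funext s
        rw [hvdef]
        simp only
        ring
      rw [heqfun]
      exact hfvInt.sub (hfInt_t.const_mul c)
    -- the square identity
    have hF2 : (F t) ^ 2 = 2 * ∫ s in Ioc (0:ℝ) t, f s * F s := by
      rw [hFdef]
      simp only
      rw [sq_integral_key hfInt_t]
      ring
    have hsplit : ∫ s in Ioc (0:ℝ) t, 2 * f s * v s
        = 2 * c * F t + 2 * ∫ s in Ioc (0:ℝ) t, f s * F s := by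
      have heqfun : (fun s => 2 * f s * v s) = fun s => 2 * c * f s + 2 * (f s * F s) := by
        funext s
        rw [hvdef]
        simp only
        ring
      rw [heqfun, integral_add (hfInt_t.const_mul (2 * c)) (hfFInt.const_mul 2),
        MeasureTheory.integral_const_mul, MeasureTheory.integral_const_mul]
    have hwt : w t = c ^ 2 + ∫ s in Ioc (0:ℝ) t, 2 * f s * v s := by
      rw [hwdef, hvdef]
      simp only
      rw [hsplit]
      nlinarith [hF2]
    -- a.e. pointwise bound
    have hVI₁' : ∀ᵐ s ∂volume, s ∈ Ioo (0:ℝ) T →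
        ∀ z ∈ Icc (-1:ℝ) 1, (relayG ρ₁ ρ₂ k (u₁ s) - y₁' s) * (z - y₁ s) ≤ 0 :=
      (ae_restrict_iff' measurableSet_Ioo).mp hVI₁
    have hVI₂' : ∀ᵐ s ∂volume, s ∈ Ioo (0:ℝ) T →
        ∀ z ∈ Icc (-1:ℝ) 1, (relayG ρ₁ ρ₂ k (u₂ s) - y₂' s) * (z - y₂ s) ≤ 0 :=
      (ae_restrict_iff' measurableSet_Ioo).mp hVI₂
    have hneT : ∀ᵐ s : ℝ ∂volume, s ≠ T := by
      rw [ae_iff]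
      have : {s : ℝ | ¬ s ≠ T} = {T} := by ext s; simp
      rw [this]
      exact Real.volume_singleton
    have hae : ∀ᵐ s ∂volume.restrict (Ioc (0:ℝ) t),
        2 * f s * v s ≤ k ^ 2 * (u₁ s - u₂ s) ^ 2 + w s := by
      filter_upwards [ae_restrict_of_ae hVI₁', ae_restrict_of_ae hVI₂',
        ae_restrict_of_ae hneT, ae_restrict_mem measurableSet_Ioc] with s hs1 hs2 hsT hs
      have hsIoo : s ∈ Ioo (0:ℝ) T := ⟨hs.1, lt_of_le_of_ne (hs.2.trans ht.2) hsT⟩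
      have hsIcc : s ∈ Icc (0:ℝ) T := Ioo_subset_Icc_self hsIoo
      have hy₁mem : y₁ s ∈ Icc (-1:ℝ) 1 := abs_le.mp (hbd₁ s hsIcc)
      have hy₂mem : y₂ s ∈ Icc (-1:ℝ) 1 := abs_le.mp (hbd₂ s hsIcc)
      have hq₁ := hs1 hsIoo (y₂ s) hy₂mem
      have hq₂ := hs2 hsIoo (y₁ s) hy₁mem
      have hlip := relayG_lipschitz hρ hk (u₁ s) (u₂ s)
      have hvs : v s = y₁ s - y₂ s := hveq s hsIcc
      rw [hwdef]
      simp only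
      rw [hvs, hfdef]
      simp only
      set G₁ := relayG ρ₁ ρ₂ k (u₁ s)
      set G₂ := relayG ρ₁ ρ₂ k (u₂ s)
      have h5 : (G₁ - G₂) * (y₁ s - y₂ s) ≤ (k * |u₁ s - u₂ s|) * |y₁ s - y₂ s| := by
        calc (G₁ - G₂) * (y₁ s - y₂ s) ≤ |(G₁ - G₂) * (y₁ s - y₂ s)| := le_abs_self _
          _ = |G₁ - G₂| * |y₁ s - y₂ s| := abs_mul _ _
          _ ≤ (k * |u₁ s - u₂ s|) * |y₁ s - y₂ s| :=
              mul_le_mul_of_nonneg_right hlip (abs_nonneg _)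
      have h6 : 2 * ((k * |u₁ s - u₂ s|) * |y₁ s - y₂ s|)
          ≤ k ^ 2 * (u₁ s - u₂ s) ^ 2 + (y₁ s - y₂ s) ^ 2 := by
        nlinarith [sq_nonneg (k * |u₁ s - u₂ s| - |y₁ s - y₂ s|), sq_abs (u₁ s - u₂ s),
          sq_abs (y₁ s - y₂ s), abs_nonneg (u₁ s - u₂ s), abs_nonneg (y₁ s - y₂ s)]
      have h7 : (y₁' s - y₂' s) * (y₁ s - y₂ s) ≤ (G₁ - G₂) * (y₁ s - y₂ s) := by
        nlinarith [hq₁, hq₂]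
      nlinarith [h5, h6, h7]
    -- integrate the bound
    have hwInt_t : IntegrableOn w (Ioc 0 t) :=
      ((hwcont.mono (Icc_subset_Icc le_rfl ht.2)).integrableOn_Icc).mono_set Ioc_subset_Icc_self
    have hΔu2Int_t : IntegrableOn (fun s => (u₁ s - u₂ s) ^ 2) (Ioc 0 t) :=
      hΔu2.mono_set hsub
    have hint : ∫ s in Ioc (0:ℝ) t, 2 * f s * v s
        ≤ ∫ s in Ioc (0:ℝ) t, (k ^ 2 * (u₁ s - u₂ s) ^ 2 + w s) := by
      apply integral_mono_ae _ ((hΔu2Int_t.const_mul (k ^ 2)).add hwInt_t) hae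
      have heqfun : (fun s => 2 * f s * v s) = fun s => 2 * (f s * v s) := by
        funext s; ring
      rw [heqfun]
      exact hfvInt.const_mul 2
    have hintsplit : ∫ s in Ioc (0:ℝ) t, (k ^ 2 * (u₁ s - u₂ s) ^ 2 + w s)
        = k ^ 2 * (∫ s in Ioc (0:ℝ) t, (u₁ s - u₂ s) ^ 2) + ∫ s in Ioc (0:ℝ) t, w s := by
      rw [integral_add (hΔu2Int_t.const_mul (k ^ 2)) hwInt_t, MeasureTheory.integral_const_mul]
    have hat : a t = (ξ₁ - ξ₂) ^ 2 + k ^ 2 * ∫ r in Ioc (0:ℝ) t, (u₁ r - u₂ r) ^ 2 := rfl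
    have hcc : c ^ 2 = (ξ₁ - ξ₂) ^ 2 := by rw [hc]
    rw [hat]
    linarith [hwt, hint, hintsplit.le, hcc.le, hcc.ge]
  -- apply Gronwall
  intro t ht
  have hg := gronwall_aux hT hwcont hacont hamono hkey t ht
  have h1 : (y₁ t - y₂ t) ^ 2 = w t := by
    rw [hwdef]
    simp only
    rw [hveq t ht]
  have h2 : a t = (ξ₁ - ξ₂) ^ 2 + k ^ 2 * ∫ s in (0:ℝ)..t, (u₁ s - u₂ s) ^ 2 := by
    rw [hadef]
    simp only
    rw [intervalIntegral.integral_of_le ht.1]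
  rw [h1]
  rw [h2] at hg
  exact hg
end
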